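/- For any probability vector p on {0,…,D} with mean 1 and the iteration f(s) = ln(∑ p_i e^{si}), the Laplace transforms L_n(x/n) converge, for every fixed x ≤ 0, to 1/(1 − μx/2)² as n → ∞, where μ = ∑ i²p_i − 1 > 0 and L_n(s) = ∏_{k=0}^{n−1} f'(f^{∘k}(s)) · e^{f^{∘n}(s)}. -/

import Mathlib

open Real Finset Filter

open Set

lemma aux_iter_deriv {f φ : ℝ → ℝ} (hf : ∀ s, HasDerivAt f (φ s) s) (n : ℕ) (s : ℝ) :
    HasDerivAt f^[n] (∏ k ∈ Finset.range n, φ (f^[k] s)) s := by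
  induction n with
  | zero => simpa using hasDerivAt_id s
  | succ n ih =>
      rw [Function.iterate_succ', Finset.prod_range_succ]
      have := (hf (f^[n] s)).comp s ih
      simpa [mul_comm] using this

lemma aux_cesaro {b : ℕ → ℕ → ℝ} {M : ℝ} (hM0 : 0 ≤ M)
    (hM : ∀ n k, k < n → |b n k| ≤ M)
    (h : ∀ ε > 0, ∃ K : ℕ, ∀ n k, K ≤ k → k < n → |b n k| ≤ ε) :
    Tendsto (fun n : ℕ => (∑ k ∈ Finset.range n, b n k) / n) atTop (nhds 0) := by
  rw [Metric.tendsto_atTop]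
  intro ε hε
  obtain ⟨K, hK⟩ := h (ε/4) (by linarith)
  obtain ⟨N₀, hN₀⟩ := exists_nat_gt ((K:ℝ) * M * 4 / ε)
  refine ⟨max N₀ (max K 1), fun n hn => ?_⟩
  have hnK : K ≤ n := le_trans (le_max_of_le_right (le_max_left _ _)) hn
  have hn1 : 1 ≤ n := le_trans (le_max_of_le_right (le_max_right _ _)) hn
  have hnN₀ : N₀ ≤ n := le_trans (le_max_left _ _) hn
  have hnpos : (0:ℝ) < n := by exact_mod_cast hn1
  rw [Real.dist_eq, sub_zero, abs_div, abs_of_pos hnpos, div_lt_iff₀ hnpos]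
  have hsplit : ∑ k ∈ Finset.range n, b n k
      = ∑ k ∈ Finset.range K, b n k + ∑ k ∈ Finset.Ico K n, b n k := by
    rw [Finset.range_eq_Ico, Finset.range_eq_Ico]
    exact (Finset.sum_Ico_consecutive (fun k => b n k) (Nat.zero_le K) hnK).symm
  have h1 : |∑ k ∈ Finset.range K, b n k| ≤ (K:ℝ) * M := by
    calc |∑ k ∈ Finset.range K, b n k| ≤ ∑ k ∈ Finset.range K, |b n k| :=
          Finset.abs_sum_le_sum_abs _ _
      _ ≤ ∑ _k ∈ Finset.range K, M := Finset.sum_le_sum fun k hk =>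
          hM n k (lt_of_lt_of_le (Finset.mem_range.mp hk) hnK)
      _ = (K:ℝ) * M := by simp [mul_comm]
  have h2 : |∑ k ∈ Finset.Ico K n, b n k| ≤ (n:ℝ) * (ε/4) := by
    calc |∑ k ∈ Finset.Ico K n, b n k| ≤ ∑ k ∈ Finset.Ico K n, |b n k| :=
          Finset.abs_sum_le_sum_abs _ _
      _ ≤ ∑ _k ∈ Finset.Ico K n, (ε/4) := Finset.sum_le_sum fun k hk => by
          obtain ⟨hk1, hk2⟩ := Finset.mem_Ico.mp hk
          exact hK n k hk1 hk2
      _ = ((n - K : ℕ) : ℝ) * (ε/4) := by simp [mul_comm]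
      _ ≤ (n:ℝ) * (ε/4) := by
          apply mul_le_mul_of_nonneg_right _ (by linarith)
          exact_mod_cast Nat.sub_le n K
  have hKM : (K:ℝ) * M < ε / 4 * n := by
    have hN₀pos : (0:ℝ) ≤ N₀ := Nat.cast_nonneg _
    have : (K:ℝ) * M * 4 / ε < (n:ℝ) := lt_of_lt_of_le hN₀ (by exact_mod_cast hnN₀)
    rw [div_lt_iff₀ hε] at this
    linarith
  calc |∑ k ∈ Finset.range n, b n k| ≤ (K:ℝ) * M + (n:ℝ) * (ε/4) := by
        rw [hsplit]; exact (abs_add_le _ _).trans (by linarith)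
    _ < ε * n := by nlinarith


lemma aux_squeeze {g : ℕ → ℝ → ℝ} {G : ℝ → ℝ} {dn : ℕ → ℝ} {x₀ d r : ℝ} (hr : 0 < r)
    (hconv : ∀ n, ConvexOn ℝ Set.univ (g n))
    (hder : ∀ n, HasDerivAt (g n) (dn n) x₀)
    (hpt : ∀ x, |x - x₀| ≤ r → Tendsto (fun n => g n x) atTop (nhds (G x)))
    (hG : HasDerivAt G d x₀) : Tendsto dn atTop (nhds d) := by
  rw [Metric.tendsto_atTop]
  intro ε hε
  have hslope := hasDerivAt_iff_tendsto_slope.mp hG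
  have hmem : {y : ℝ | dist (slope G x₀ y) d < ε/3} ∈ nhdsWithin x₀ {x₀}ᶜ :=
    hslope (Metric.ball_mem_nhds d (by linarith))
  rw [Metric.mem_nhdsWithin_iff] at hmem
  obtain ⟨δ₀, hδ₀, hball⟩ := hmem
  set δ := min (δ₀/2) r with hδdef
  have hδpos : 0 < δ := lt_min (by linarith) hr
  have hδr : δ ≤ r := min_le_right _ _
  have hδ₀' : δ < δ₀ := lt_of_le_of_lt (min_le_left _ _) (by linarith)
  have hplus : dist (slope G x₀ (x₀ + δ)) d < ε/3 := by
    apply hball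
    constructor
    · simp [Metric.mem_ball, Real.dist_eq, abs_of_pos hδpos, hδ₀']
    · simp only [Set.mem_compl_iff, Set.mem_singleton_iff]
      intro h
      nlinarith [congrArg (fun t => t - x₀) h]
  have hminus : dist (slope G x₀ (x₀ - δ)) d < ε/3 := by
    apply hball
    constructor
    · simp only [Metric.mem_ball, Real.dist_eq]
      rw [show x₀ - δ - x₀ = -δ by ring, abs_neg, abs_of_pos hδpos]
      exact hδ₀'
    · simp only [Set.mem_compl_iff, Set.mem_singleton_iff]
      intro h
      nlinarith [congrArg (fun t => t - x₀) h]
  have hsp : |(G (x₀ + δ) - G x₀)/δ - d| < ε/3 := by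
    have : slope G x₀ (x₀ + δ) = (G (x₀ + δ) - G x₀)/δ := by
      rw [slope_def_field]; congr 1; ring
    rwa [Real.dist_eq, this] at hplus
  have hsm : |(G x₀ - G (x₀ - δ))/δ - d| < ε/3 := by
    have : slope G x₀ (x₀ - δ) = (G x₀ - G (x₀ - δ))/δ := by
      rw [slope_def_field]
      rw [show x₀ - δ - x₀ = -δ by ring, div_neg, ← neg_div, neg_sub]
    rwa [Real.dist_eq, this] at hminus
  have e1 := (hpt (x₀ + δ) (by rw [show x₀ + δ - x₀ = δ by ring, abs_of_pos hδpos]; exact hδr)).eventually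
    (Metric.ball_mem_nhds (G (x₀ + δ)) (show (0:ℝ) < ε*δ/6 by positivity))
  have e2 := (hpt (x₀ - δ) (by rw [show x₀ - δ - x₀ = -δ by ring, abs_neg, abs_of_pos hδpos]; exact hδr)).eventually
    (Metric.ball_mem_nhds (G (x₀ - δ)) (show (0:ℝ) < ε*δ/6 by positivity))
  have e3 := (hpt x₀ (by simp [le_of_lt hr])).eventually
    (Metric.ball_mem_nhds (G x₀) (show (0:ℝ) < ε*δ/6 by positivity))
  obtain ⟨N, hN⟩ := ((e1.and e2).and e3).exists_forall_of_atTop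
  refine ⟨N, fun n hn => ?_⟩
  obtain ⟨⟨c1, c2⟩, c3⟩ := hN n hn
  simp only [Metric.mem_ball, Real.dist_eq] at c1 c2 c3
  -- upper bound
  have hub : dn n ≤ (g n (x₀ + δ) - g n x₀)/δ := by
    have := (hconv n).le_slope_of_hasDerivAt (Set.mem_univ x₀) (Set.mem_univ (x₀ + δ))
      (by linarith) (hder n)
    rw [slope_def_field, show x₀ + δ - x₀ = δ by ring] at this
    exact this
  have hlb : (g n x₀ - g n (x₀ - δ))/δ ≤ dn n := by
    have := (hconv n).slope_le_of_hasDerivAt (Set.mem_univ (x₀ - δ)) (Set.mem_univ x₀)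
      (by linarith) (hder n)
    rw [slope_def_field, show x₀ - (x₀ - δ) = δ by ring] at this
    exact this
  rw [Real.dist_eq, abs_sub_lt_iff]
  rw [abs_sub_lt_iff] at c1 c2 c3 hsp hsm
  constructor
  · have h1 : dn n * δ ≤ g n (x₀ + δ) - g n x₀ := by
      rw [← le_div_iff₀ hδpos]; exact hub
    have h2 : (G (x₀ + δ) - G x₀) < (d + ε/3) * δ := by
      rw [← div_lt_iff₀ hδpos]; linarith [hsp.1]
    have h3 : dn n * δ < (d + ε) * δ := by nlinarith
    have := lt_of_mul_lt_mul_right h3 hδpos.le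
    linarith
  · have h1 : g n x₀ - g n (x₀ - δ) ≤ dn n * δ := by
      rw [← div_le_iff₀ hδpos]; exact hlb
    have h2 : (d - ε/3) * δ < (G x₀ - G (x₀ - δ)) := by
      rw [← lt_div_iff₀ hδpos]; linarith [hsm.2]
    have h3 : (d - ε) * δ < dn n * δ := by nlinarith
    have := lt_of_mul_lt_mul_right h3 hδpos.le
    linarith

lemma aux_pointwise {f : ℝ → ℝ} {μ : ℝ} (hμpos : 0 < μ)
    (hcont : Continuous f) (hmono : Monotone f)
    (hneg : ∀ s, s < 0 → f s < 0) (hgt : ∀ s, s < 0 → s < f s)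
    (hδ : Tendsto (fun s => (-f s)⁻¹ - (-s)⁻¹ - μ/2) (nhdsWithin 0 (Set.Iio 0)) (nhds 0)) :
    ∀ y, y < 0 → Tendsto (fun n : ℕ => (n:ℝ) * (Real.exp (f^[n] (y/n)) - 1)) atTop
      (nhds (y/(1-μ*y/2))) := by
  intro y hy
  set δf : ℝ → ℝ := fun s => (-f s)⁻¹ - (-s)⁻¹ - μ/2 with hδfdef
  -- the sequence v k = f^[k] y increases to 0
  set v : ℕ → ℝ := fun k => f^[k] y with hvdef
  have hvneg : ∀ k, v k < 0 := by
    intro k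
    induction k with
    | zero => simpa [hvdef] using hy
    | succ k ih =>
        show f^[k+1] y < 0
        rw [Function.iterate_succ_apply']
        exact hneg _ (by simpa using ih)
  have hvmono : Monotone v := by
    apply monotone_nat_of_le_succ
    intro k
    show f^[k] y ≤ f^[k+1] y
    rw [Function.iterate_succ_apply']
    exact (hgt _ (hvneg k)).le
  have hvbdd : BddAbove (Set.range v) := ⟨0, fun z hz => by
    obtain ⟨k, rfl⟩ := hz; exact (hvneg k).le⟩
  have hvlim : Tendsto v atTop (nhds (⨆ k, v k)) := tendsto_atTop_ciSup hvmono hvbdd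
  set ℓ := ⨆ k, v k with hℓdef
  have hℓ0 : ℓ ≤ 0 := ciSup_le fun k => (hvneg k).le
  have hfix : f ℓ = ℓ := by
    have h1 : Tendsto (fun k => v (k+1)) atTop (nhds ℓ) :=
      hvlim.comp (tendsto_add_atTop_nat 1)
    have h2 : Tendsto (fun k => f (v k)) atTop (nhds (f ℓ)) :=
      (hcont.tendsto ℓ).comp hvlim
    have heq : (fun k => v (k+1)) = fun k => f (v k) := by
      funext k; rw [hvdef]; exact Function.iterate_succ_apply' f k y
    rw [heq] at h1
    exact tendsto_nhds_unique h2 h1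
  have hℓz : ℓ = 0 := by
    by_contra h
    have hl : ℓ < 0 := lt_of_le_of_ne hℓ0 h
    have h2 := hgt ℓ hl
    rw [hfix] at h2
    exact lt_irrefl _ h2
  have hvtend : Tendsto v atTop (nhds 0) := hℓz ▸ hvlim
  -- facts about u n k = f^[k] (y/n)
  have hu0neg : ∀ n : ℕ, 1 ≤ n → y / (n:ℝ) < 0 := fun n hn =>
    div_neg_of_neg_of_pos hy (by exact_mod_cast hn)
  have huneg : ∀ n : ℕ, 1 ≤ n → ∀ k, f^[k] (y/(n:ℝ)) < 0 := by
    intro n hn k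
    induction k with
    | zero => simpa using hu0neg n hn
    | succ k ih => rw [Function.iterate_succ_apply']; exact hneg _ ih
  have huv : ∀ n : ℕ, 1 ≤ n → ∀ k, v k ≤ f^[k] (y/(n:ℝ)) := by
    intro n hn k
    induction k with
    | zero =>
        show y ≤ y / n
        have hn' : (1:ℝ) ≤ n := by exact_mod_cast hn
        rw [le_div_iff₀ (by linarith : (0:ℝ) < n)]
        nlinarith
    | succ k ih =>
        show f^[k+1] y ≤ f^[k+1] (y/(n:ℝ))
        rw [Function.iterate_succ_apply', Function.iterate_succ_apply']
        exact hmono ih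
  have huy : ∀ n : ℕ, 1 ≤ n → ∀ k, y ≤ f^[k] (y/(n:ℝ)) := by
    intro n hn k
    have h1 : v 0 ≤ v k := hvmono (Nat.zero_le k)
    have h0 : v 0 = y := rfl
    rw [h0] at h1
    exact le_trans h1 (huv n hn k)
  -- smallness of δf near 0⁻
  have hsmall : ∀ ε > (0:ℝ), ∃ η < (0:ℝ), ∀ s, η < s → s < 0 → |δf s| < ε := by
    intro ε hε
    have hmem := hδ (Metric.ball_mem_nhds (0:ℝ) hε)
    rw [Filter.mem_map, mem_nhdsLT_iff_exists_Ioo_subset] at hmem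
    obtain ⟨η, hη, hsub⟩ := hmem
    refine ⟨η, hη, fun s h1 h2 => ?_⟩
    have := hsub ⟨h1, h2⟩
    simpa [Metric.mem_ball, Real.dist_eq] using this
  -- global bound for δf on [y,0)
  obtain ⟨η₁, hη₁, hsm1⟩ := hsmall 1 one_pos
  set η₂ : ℝ := max η₁ (y/2) with hη₂def
  have hη₂neg : η₂ < 0 := max_lt hη₁ (by linarith)
  have hyη₂ : y ≤ η₂ := le_trans (by linarith) (le_max_right _ _)
  have hcontδ : ContinuousOn δf (Set.Icc y η₂) := by
    have h1 : ContinuousOn (fun s => (-f s)⁻¹) (Set.Icc y η₂) := by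
      apply ContinuousOn.inv₀ (hcont.neg.continuousOn)
      intro s hs
      have : f s < 0 := hneg s (lt_of_le_of_lt hs.2 hη₂neg)
      simp only [ne_eq, Pi.neg_apply, neg_eq_zero]
      linarith
    have h2 : ContinuousOn (fun s : ℝ => (-s)⁻¹) (Set.Icc y η₂) := by
      apply ContinuousOn.inv₀ (continuous_neg.continuousOn)
      intro s hs
      have : s < 0 := lt_of_le_of_lt hs.2 hη₂neg
      simp only [ne_eq, neg_eq_zero]
      linarith
    exact (h1.sub h2).sub continuousOn_const
  obtain ⟨C, hC⟩ := (isCompact_Icc : IsCompact (Set.Icc y η₂)).exists_bound_of_continuousOn hcontδ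
  set M : ℝ := max C 1 with hMdef
  have hM0 : (0:ℝ) ≤ M := le_trans zero_le_one (le_max_right _ _)
  have hbound : ∀ s, y ≤ s → s < 0 → |δf s| ≤ M := by
    intro s h1 h2
    rcases le_or_gt s η₂ with h | h
    · have := hC s ⟨h1, h⟩
      rw [Real.norm_eq_abs] at this
      exact le_trans this (le_max_left _ _)
    · have hs1 : η₁ < s := lt_of_le_of_lt (le_max_left _ _) h
      exact le_trans (hsm1 s hs1 h2).le (le_max_right _ _)
  -- Cesàro averages of δf along the orbit tend to 0
  have hE : Tendsto (fun n : ℕ => (∑ k ∈ Finset.range n, δf (f^[k] (y/(n:ℝ)))) / n)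
      atTop (nhds 0) := by
    apply aux_cesaro hM0
    · intro n k hk
      have hn : 1 ≤ n := by omega
      exact hbound _ (huy n hn k) (huneg n hn k)
    · intro ε hε
      obtain ⟨η, hη, hs⟩ := hsmall ε hε
      have hev : ∀ᶠ k in atTop, η < v k := hvtend.eventually (eventually_gt_nhds hη)
      obtain ⟨K, hK2⟩ := hev.exists_forall_of_atTop
      refine ⟨K, fun n k hk1 hk2 => ?_⟩
      have hn : 1 ≤ n := by omega
      exact (hs _ (lt_of_lt_of_le (hK2 k hk1) (huv n hn k)) (huneg n hn k)).le
  -- telescoping identity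
  have htel : ∀ n : ℕ, 1 ≤ n →
      (-(f^[n] (y/(n:ℝ))))⁻¹ / n
        = ((-y)⁻¹ + μ/2) + (∑ k ∈ Finset.range n, δf (f^[k] (y/(n:ℝ)))) / n := by
    intro n hn
    have hnR : (0:ℝ) < n := by exact_mod_cast hn
    have tele := Finset.sum_range_sub (fun k => (-(f^[k] (y/(n:ℝ))))⁻¹) n
    have hterm : ∀ k ∈ Finset.range n,
        (-(f^[k+1] (y/(n:ℝ))))⁻¹ - (-(f^[k] (y/(n:ℝ))))⁻¹ = μ/2 + δf (f^[k] (y/(n:ℝ))) := by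
      intro k _
      rw [Function.iterate_succ_apply']
      simp only [hδfdef]
      ring
    rw [Finset.sum_congr rfl hterm] at tele
    rw [Finset.sum_add_distrib, Finset.sum_const, Finset.card_range, nsmul_eq_mul] at tele
    have ha0 : (-(f^[0] (y/(n:ℝ))))⁻¹ = (n:ℝ) * (-y)⁻¹ := by
      simp only [Function.iterate_zero_apply]
      rw [show -(y/(n:ℝ)) = (-y)/(n:ℝ) by ring, inv_div, div_eq_mul_inv]
    rw [ha0] at tele
    have han : (-(f^[n] (y/(n:ℝ))))⁻¹
        = (n:ℝ) * (-y)⁻¹ + (n:ℝ) * (μ/2) + ∑ k ∈ Finset.range n, δf (f^[k] (y/(n:ℝ))) := by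
      linarith
    rw [han]
    field_simp
  set c : ℝ := (-y)⁻¹ + μ/2 with hcdef
  have hc : 0 < c := add_pos (inv_pos.mpr (by linarith)) (by linarith)
  have hA : Tendsto (fun n : ℕ => (-(f^[n] (y/(n:ℝ))))⁻¹ / n) atTop (nhds c) := by
    have h0 : Tendsto (fun n : ℕ =>
        c + (∑ k ∈ Finset.range n, δf (f^[k] (y/(n:ℝ)))) / n) atTop (nhds (c + 0)) :=
      tendsto_const_nhds.add hE
    rw [add_zero] at h0
    apply h0.congr'
    filter_upwards [eventually_ge_atTop 1] with n hn
    exact (htel n hn).symm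
  have hB : Tendsto (fun n : ℕ => (n:ℝ) * (-(f^[n] (y/(n:ℝ))))) atTop (nhds c⁻¹) := by
    have h1 := hA.inv₀ (ne_of_gt hc)
    apply h1.congr'
    filter_upwards [eventually_ge_atTop 1] with n hn
    rw [inv_div, div_eq_mul_inv, inv_inv]
  have hu0 : Tendsto (fun n : ℕ => f^[n] (y/(n:ℝ))) atTop (nhds 0) := by
    have h2 : Tendsto (fun n : ℕ => ((n:ℝ) * (-(f^[n] (y/(n:ℝ))))) * (n:ℝ)⁻¹)
        atTop (nhds (c⁻¹ * 0)) :=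
      hB.mul (tendsto_inv_atTop_zero.comp tendsto_natCast_atTop_atTop)
    rw [mul_zero] at h2
    have h3 := h2.neg
    rw [neg_zero] at h3
    apply h3.congr'
    filter_upwards [eventually_ge_atTop 1] with n hn
    have hnR : (n:ℝ) ≠ 0 := by positivity
    field_simp
  have hslope : Tendsto (fun n : ℕ => slope Real.exp 0 (f^[n] (y/(n:ℝ)))) atTop (nhds 1) := by
    have hexp : Tendsto (slope Real.exp 0) (nhdsWithin 0 {(0:ℝ)}ᶜ) (nhds 1) := by
      have h := Real.hasDerivAt_exp 0
      rw [Real.exp_zero] at h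
      exact hasDerivAt_iff_tendsto_slope.mp h
    apply hexp.comp
    rw [tendsto_nhdsWithin_iff]
    refine ⟨hu0, ?_⟩
    filter_upwards [eventually_ge_atTop 1] with n hn
    exact ne_of_lt (huneg n hn n)
  have hfinal := hB.mul hslope.neg
  have hval : c⁻¹ * (-1) = y / (1 - μ*y/2) := by
    have h1 : (0:ℝ) < 1 - μ*y/2 := by nlinarith
    have hyne : (-y) ≠ 0 := ne_of_gt (by linarith)
    have hcc : c = (1 - μ*y/2) / (-y) := by
      rw [hcdef, eq_div_iff hyne]
      have hinv : (-y)⁻¹ * (-y) = 1 := inv_mul_cancel₀ hyne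
      linear_combination hinv
    rw [hcc, inv_div, mul_neg_one, show (1:ℝ) - μ*y/2 = 1 - μ*y/2 from rfl]
    rw [← neg_div, neg_neg]
  rw [hval] at hfinal
  apply hfinal.congr'
  filter_upwards [eventually_ge_atTop 1] with n hn
  have hun : f^[n] (y/(n:ℝ)) < 0 := huneg n hn n
  rw [slope_def_field, Real.exp_zero]
  have hne : f^[n] (y/(n:ℝ)) ≠ 0 := ne_of_lt hun
  field_simp
  ring


/-- For a positive probability vector p on {0,…,D} with mean 1,
f(s) = ln(∑ p_i e^{si}), μ = ∑ i²p_i − 1 > 0, and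
L_n(s) = ∏_{k=0}^{n−1} f'(f^∘k(s)) · e^{f^∘n(s)}, one has
L_n(x/n) → 1/(1 − μx/2)² as n → ∞, for every fixed x ≤ 0. -/
theorem laplace_transform_convergence
    (D : ℕ) (hD : 2 ≤ D) (p : Fin (D + 1) → ℝ)
    (hpos : ∀ i, 0 < p i)
    (hsum : ∑ i, p i = 1)
    (hmean : ∑ i, (i.1 : ℝ) * p i = 1)
    (μ : ℝ) (hμ : μ = (∑ i, (i.1 : ℝ) ^ 2 * p i) - 1) (hμpos : 0 < μ)
    (f : ℝ → ℝ)
    (hf : ∀ s, f s = Real.log (∑ i : Fin (D + 1), p i * Real.exp (s * i.1)))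
    (L : ℕ → ℝ → ℝ)
    (hL : ∀ n s, L n s =
      (∏ k ∈ Finset.range n, deriv f (f^[k] s)) * Real.exp (f^[n] s)) :
    ∀ x ≤ (0 : ℝ),
      Tendsto (fun n : ℕ => L n (x / n)) atTop
        (nhds (1 / (1 - μ * x / 2) ^ 2)) := by
  intro x hx
  set S : ℝ → ℝ := fun s => ∑ i : Fin (D+1), p i * Real.exp (s * (i.1:ℝ)) with hSdef
  set T : ℝ → ℝ := fun s => ∑ i : Fin (D+1), p i * (Real.exp (s * (i.1:ℝ)) * (i.1:ℝ)) with hTdef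
  set R : ℝ → ℝ := fun s => ∑ i : Fin (D+1), p i * (Real.exp (s * (i.1:ℝ)) * (i.1:ℝ) * (i.1:ℝ)) with hRdef
  set φ : ℝ → ℝ := fun s => T s / S s with hφdef
  have hSpos : ∀ s, 0 < S s := fun s =>
    Finset.sum_pos (fun i _ => mul_pos (hpos i) (Real.exp_pos _)) ⟨0, Finset.mem_univ 0⟩
  have hS' : ∀ s, HasDerivAt S (T s) s := by
    intro s
    have h := HasDerivAt.fun_sum (fun i (_ : i ∈ Finset.univ) =>
      (((hasDerivAt_id s).mul_const ((i:Fin (D+1)).1:ℝ)).exp.const_mul (p i)))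
    simpa using h
  have hT' : ∀ s, HasDerivAt T (R s) s := by
    intro s
    have h := HasDerivAt.fun_sum (fun i (_ : i ∈ Finset.univ) =>
      ((((hasDerivAt_id s).mul_const ((i:Fin (D+1)).1:ℝ)).exp.mul_const ((i:Fin (D+1)).1:ℝ)).const_mul (p i)))
    simpa using h
  have hfd : ∀ s, HasDerivAt f (φ s) s := by
    intro s
    have hfe : f = fun u => Real.log (S u) := funext fun u => hf u
    rw [hfe]
    exact (hS' s).log (ne_of_gt (hSpos s))
  have hS0 : S 0 = 1 := by rw [hSdef]; simpa using hsum
  have hT0 : T 0 = 1 := by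
    rw [hTdef]
    simp only [zero_mul, Real.exp_zero, one_mul]
    rw [← hmean]
    exact Finset.sum_congr rfl fun i _ => mul_comm _ _
  have hR0 : R 0 = μ + 1 := by
    rw [hRdef]
    simp only [zero_mul, Real.exp_zero, one_mul]
    have : ∀ i : Fin (D+1), p i * ((i.1:ℝ) * (i.1:ℝ)) = (i.1:ℝ)^2 * p i := fun i => by ring
    rw [show (fun i : Fin (D+1) => p i * ((i.1:ℝ) * (i.1:ℝ))) = fun i => (i.1:ℝ)^2 * p i from funext this]
    rw [hμ]; ring
  have hφ0 : φ 0 = 1 := by rw [hφdef]; simp [hS0, hT0]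
  have hφμ : HasDerivAt φ μ 0 := by
    have h := (hT' 0).fun_div (hS' 0) (ne_of_gt (hSpos 0))
    rw [hφdef]
    rw [hS0, hT0, hR0, show ((μ + 1) * 1 - 1 * 1) / (1:ℝ) ^ 2 = μ by ring] at h
    exact h
  have hf0 : f 0 = 0 := by
    rw [hf 0]
    simp only [zero_mul, Real.exp_zero, mul_one]
    rw [hsum, Real.log_one]
  have hmono : Monotone f := by
    intro a b hab
    rw [hf a, hf b]
    apply Real.log_le_log (hSpos a)
    apply Finset.sum_le_sum
    intro i _
    apply mul_le_mul_of_nonneg_left _ (hpos i).le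
    apply Real.exp_le_exp.mpr
    exact mul_le_mul_of_nonneg_right hab (Nat.cast_nonneg _)
  have hneg : ∀ s, s < 0 → f s < 0 := by
    intro s hs
    rw [hf s]
    apply Real.log_neg (hSpos s)
    rw [← hsum]
    apply Finset.sum_lt_sum
    · intro i _
      nth_rewrite 2 [show p i = p i * 1 by ring]
      apply mul_le_mul_of_nonneg_left _ (hpos i).le
      rw [Real.exp_le_one_iff]
      exact mul_nonpos_of_nonpos_of_nonneg hs.le (Nat.cast_nonneg _)
    · refine ⟨⟨1, by omega⟩, Finset.mem_univ _, ?_⟩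
      nth_rewrite 2 [show p (⟨1, by omega⟩ : Fin (D+1)) = p ⟨1, by omega⟩ * 1 by ring]
      apply mul_lt_mul_of_pos_left _ (hpos _)
      rw [Real.exp_lt_one_iff]
      simpa using hs
  have hgt : ∀ s, s < 0 → s < f s := by
    intro s hs
    rw [hf s, Real.lt_log_iff_exp_lt (hSpos s)]
    have hsum2 : ∑ i : Fin (D+1), p i * (Real.exp s * (1 + s * ((i.1:ℝ) - 1))) = Real.exp s := by
      have expand : ∀ i : Fin (D+1), p i * (Real.exp s * (1 + s * ((i.1:ℝ) - 1)))
          = Real.exp s * ((1 - s) * p i) + (Real.exp s * s) * ((i.1:ℝ) * p i) := fun i => by ring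
      rw [Finset.sum_congr rfl (fun i _ => expand i), Finset.sum_add_distrib,
        ← Finset.mul_sum, ← Finset.mul_sum, ← Finset.mul_sum, hsum, hmean]
      ring
    rw [← hsum2]
    apply Finset.sum_lt_sum
    · intro i _
      apply mul_le_mul_of_nonneg_left _ (hpos i).le
      have hsplit : Real.exp (s * (i.1:ℝ)) = Real.exp s * Real.exp (s * ((i.1:ℝ) - 1)) := by
        rw [← Real.exp_add]; ring_nf
      rw [hsplit]
      apply mul_le_mul_of_nonneg_left _ (Real.exp_pos s).le
      have h1 := Real.add_one_le_exp (s * ((i.1:ℝ) - 1))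
      linarith
    · refine ⟨⟨0, by omega⟩, Finset.mem_univ _, ?_⟩
      have h0 : (((⟨0, by omega⟩ : Fin (D+1)) : Fin (D+1)).1 : ℝ) = 0 := by norm_num
      rw [h0, mul_zero, Real.exp_zero]
      apply mul_lt_mul_of_pos_left _ (hpos _)
      have h := Real.add_one_lt_exp (show -s ≠ 0 by linarith)
      have hinv : Real.exp (-s) = (Real.exp s)⁻¹ := Real.exp_neg s
      have hpos' := Real.exp_pos s
      have hmul : Real.exp s * (Real.exp s)⁻¹ = 1 := mul_inv_cancel₀ (ne_of_gt hpos')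
      nlinarith [mul_lt_mul_of_pos_left h hpos', hmul, hinv]
  have hcont : Continuous f := continuous_iff_continuousAt.mpr fun s => (hfd s).continuousAt
  -- second-order behaviour near 0 from the left
  have hN2 : Tendsto (fun s => (f s - s)/s^2) (nhdsWithin 0 (Set.Iio 0)) (nhds (μ/2)) := by
    apply HasDerivAt.lhopital_zero_nhdsLT (f' := fun s => φ s - 1) (g' := fun s : ℝ => 2*s)
    · exact Filter.Eventually.of_forall fun s => (hfd s).sub (hasDerivAt_id s)
    · refine Filter.Eventually.of_forall fun s => ?_
      have := hasDerivAt_pow 2 s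
      norm_num at this
      exact this
    · filter_upwards [self_mem_nhdsWithin] with s hs
      exact mul_ne_zero two_ne_zero (ne_of_lt hs)
    · have h1 : Tendsto (fun s => f s - s) (nhds 0) (nhds (f 0 - 0)) :=
        (hcont.sub continuous_id).tendsto 0
      rw [hf0, sub_zero] at h1
      exact h1.mono_left nhdsWithin_le_nhds
    · have h1 : Tendsto (fun s : ℝ => s^2) (nhds 0) (nhds ((0:ℝ)^2)) :=
        (continuous_pow 2).tendsto 0
      norm_num at h1
      exact h1.mono_left nhdsWithin_le_nhds
    · have hslope := hasDerivAt_iff_tendsto_slope.mp hφμ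
      have h2 : Tendsto (fun s => (1/2) * slope φ 0 s) (nhdsWithin 0 {(0:ℝ)}ᶜ)
          (nhds ((1/2) * μ)) := hslope.const_mul _
      have h3 := h2.mono_left
        (nhdsWithin_mono 0 (fun s (hs : s ∈ Set.Iio 0) => (ne_of_lt hs : s ≠ 0)))
      have h4 : Tendsto (fun s => (φ s - 1)/(2*s)) (nhdsWithin 0 (Set.Iio 0))
          (nhds ((1/2) * μ)) := by
        apply h3.congr'
        filter_upwards [self_mem_nhdsWithin] with s hs
        rw [slope_def_field, hφ0, sub_zero]
        field_simp
      have : (1/2 : ℝ) * μ = μ/2 := by ring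
      rwa [this] at h4
  have hD2 : Tendsto (fun s => f s / s) (nhdsWithin 0 (Set.Iio 0)) (nhds 1) := by
    have hd : HasDerivAt f 1 0 := by rw [← hφ0]; exact hfd 0
    have h := hasDerivAt_iff_tendsto_slope.mp hd
    have h2 := h.mono_left
      (nhdsWithin_mono 0 (fun s (hs : s ∈ Set.Iio 0) => (ne_of_lt hs : s ≠ 0)))
    apply h2.congr'
    filter_upwards [self_mem_nhdsWithin] with s hs
    rw [slope_def_field, hf0, sub_zero, sub_zero]
  have hδlim : Tendsto (fun s => (-f s)⁻¹ - (-s)⁻¹ - μ/2) (nhdsWithin 0 (Set.Iio 0)) (nhds 0) := by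
    have hq := hN2.div hD2 one_ne_zero
    have hq2 := hq.sub (tendsto_const_nhds (α := ℝ) (x := μ/2))
    have hval : μ/2/1 - μ/2 = 0 := by norm_num
    rw [hval] at hq2
    apply hq2.congr'
    filter_upwards [self_mem_nhdsWithin] with s hs
    have hfs : f s < 0 := hneg s hs
    have hs0 : s ≠ 0 := ne_of_lt hs
    have hfs0 : f s ≠ 0 := ne_of_lt hfs
    have hY : f s / s ≠ 0 := div_ne_zero hfs0 hs0
    have hkey : ((f s - s)/s^2)/(f s/s) = (-f s)⁻¹ - (-s)⁻¹ := by
      rw [div_eq_iff hY, inv_sub_inv (neg_ne_zero.mpr hfs0) (neg_ne_zero.mpr hs0), neg_mul_neg]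
      rw [div_mul_div_comm]
      rw [div_eq_div_iff (pow_ne_zero 2 hs0) (mul_ne_zero (mul_ne_zero hfs0 hs0) hs0)]
      ring
    simp only [Pi.div_apply]
    rw [hkey]
  have hpt := aux_pointwise hμpos hcont hmono hneg hgt hδlim
  rcases hx.lt_or_eq with hlt | heq
  swap
  · -- case x = 0
    subst heq
    have hL0 : ∀ n : ℕ, L n ((0:ℝ)/n) = 1 := by
      intro n
      have hdf0 : deriv f 0 = 1 := by rw [(hfd 0).deriv, hφ0]
      rw [zero_div, hL]
      simp [Function.iterate_fixed hf0, hdf0]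
    have heq2 : (fun n : ℕ => L n ((0:ℝ)/n)) = fun _ => (1:ℝ) := funext hL0
    rw [heq2]
    have : (1:ℝ) / (1 - μ * 0 / 2) ^ 2 = 1 := by norm_num
    rw [this]
    exact tendsto_const_nhds
  · -- case x < 0
    -- convexity of s ↦ exp (f^[n] s)
    set Pg : ℝ → ℝ := fun t => ∑ i : Fin (D+1), p i * t^(i.1 : ℕ) with hPgdef
    have hPgmono : ∀ a b : ℝ, 0 ≤ a → a ≤ b → Pg a ≤ Pg b := by
      intro a b ha hab
      apply Finset.sum_le_sum
      intro i _
      exact mul_le_mul_of_nonneg_left (pow_le_pow_left₀ ha hab _) (hpos i).le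
    have hPgconv : ∀ a b w1 w2 : ℝ, 0 ≤ a → 0 ≤ b → 0 ≤ w1 → 0 ≤ w2 → w1 + w2 = 1 →
        Pg (w1*a + w2*b) ≤ w1 * Pg a + w2 * Pg b := by
      intro a b w1 w2 ha hb hw1 hw2 hw
      have h1 : ∀ i : Fin (D+1), p i * (w1*a + w2*b)^(i.1:ℕ)
          ≤ p i * (w1 * a^(i.1:ℕ) + w2 * b^(i.1:ℕ)) := by
        intro i
        apply mul_le_mul_of_nonneg_left _ (hpos i).le
        have := (convexOn_pow (i.1:ℕ)).2 (Set.mem_Ici.mpr ha) (Set.mem_Ici.mpr hb) hw1 hw2 hw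
        simpa [smul_eq_mul] using this
      calc Pg (w1*a + w2*b) ≤ ∑ i : Fin (D+1), p i * (w1 * a^(i.1:ℕ) + w2 * b^(i.1:ℕ)) :=
            Finset.sum_le_sum (fun i _ => h1 i)
        _ = w1 * Pg a + w2 * Pg b := by
            rw [hPgdef, Finset.mul_sum, Finset.mul_sum, ← Finset.sum_add_distrib]
            exact Finset.sum_congr rfl fun i _ => by ring
    have hPt : ∀ n : ℕ, ∀ s : ℝ, Real.exp (f^[n+1] s) = Pg (Real.exp (f^[n] s)) := by
      intro n s
      rw [Function.iterate_succ_apply', hf (f^[n] s), Real.exp_log (hSpos (f^[n] s))]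
      rw [hSdef, hPgdef]
      exact Finset.sum_congr rfl fun i _ => by rw [mul_comm (f^[n] s) ((i.1:ℕ):ℝ), Real.exp_nat_mul]
    have hGfconv : ∀ n : ℕ, ConvexOn ℝ Set.univ (fun s => Real.exp (f^[n] s)) := by
      intro n
      induction n with
      | zero => simpa using convexOn_exp
      | succ n ih =>
          refine ⟨convex_univ, ?_⟩
          intro a _ b _ w1 w2 hw1 hw2 hw
          simp only [smul_eq_mul, hPt n]
          have hcomb := ih.2 (Set.mem_univ a) (Set.mem_univ b) hw1 hw2 hw
          simp only [smul_eq_mul] at hcomb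
          calc Pg (Real.exp (f^[n] (w1*a + w2*b)))
              ≤ Pg (w1 * Real.exp (f^[n] a) + w2 * Real.exp (f^[n] b)) :=
                hPgmono _ _ (Real.exp_pos _).le hcomb
            _ ≤ w1 * Pg (Real.exp (f^[n] a)) + w2 * Pg (Real.exp (f^[n] b)) :=
                hPgconv _ _ _ _ (Real.exp_pos _).le (Real.exp_pos _).le hw1 hw2 hw
    have hconv : ∀ n : ℕ, ConvexOn ℝ Set.univ
        (fun z => (n:ℝ) * (Real.exp (f^[n] (z/(n:ℝ))) - 1)) := by
      intro n
      have h1 : ConvexOn ℝ Set.univ (fun z => Real.exp (f^[n] (z/(n:ℝ)))) := by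
        refine ⟨convex_univ, ?_⟩
        intro a _ b _ w1 w2 hw1 hw2 hw
        have := (hGfconv n).2 (Set.mem_univ (a/(n:ℝ))) (Set.mem_univ (b/(n:ℝ))) hw1 hw2 hw
        simp only [smul_eq_mul] at this ⊢
        rw [show (w1*a + w2*b)/(n:ℝ) = w1*(a/(n:ℝ)) + w2*(b/(n:ℝ)) by
          rw [add_div, mul_div_assoc, mul_div_assoc]]
        exact this
      have h2 : (fun z => (n:ℝ) * (Real.exp (f^[n] (z/(n:ℝ))) - 1))
          = fun z => (n:ℝ) • Real.exp (f^[n] (z/(n:ℝ))) + (-(n:ℝ)) := by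
        funext z; simp [smul_eq_mul]; ring
      rw [h2]
      exact (h1.smul (Nat.cast_nonneg n)).add_const _
    -- derivatives
    set dn : ℕ → ℝ := fun n => if n = 0 then 0 else L n (x/(n:ℝ)) with hdndef
    have hder : ∀ n : ℕ, HasDerivAt (fun z => (n:ℝ) * (Real.exp (f^[n] (z/(n:ℝ))) - 1)) (dn n) x := by
      intro n
      rcases Nat.eq_zero_or_pos n with h0 | h1
      · subst h0
        simp only [Nat.cast_zero, zero_mul, hdndef, if_pos]
        exact hasDerivAt_const x 0
      · have hn0 : (n:ℝ) ≠ 0 := by positivity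
        have hin : HasDerivAt (fun z : ℝ => z/(n:ℝ)) (1/(n:ℝ)) x := by
          simpa using (hasDerivAt_id x).div_const (n:ℝ)
        have hit := aux_iter_deriv hfd n (x/(n:ℝ))
        have hcomp := HasDerivAt.comp x hit hin
        have hexp := hcomp.exp
        have hfin := (hexp.sub_const 1).const_mul (n:ℝ)
        have hval : (n:ℝ) * (Real.exp (f^[n] (x/(n:ℝ))) *
            ((∏ k ∈ Finset.range n, φ (f^[k] (x/(n:ℝ)))) * (1/(n:ℝ)))) = dn n := by
          rw [hdndef]
          simp only [if_neg (Nat.pos_iff_ne_zero.mp h1)]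
          rw [hL]
          rw [show (∏ k ∈ Finset.range n, deriv f (f^[k] (x/(n:ℝ))))
              = ∏ k ∈ Finset.range n, φ (f^[k] (x/(n:ℝ))) from
            Finset.prod_congr rfl fun k _ => (hfd _).deriv]
          rw [show (n:ℝ) * (Real.exp (f^[n] (x/(n:ℝ))) *
              ((∏ k ∈ Finset.range n, φ (f^[k] (x/(n:ℝ)))) * (1/(n:ℝ))))
              = ((n:ℝ) * (1/(n:ℝ))) * ((∏ k ∈ Finset.range n, φ (f^[k] (x/(n:ℝ))))
                * Real.exp (f^[n] (x/(n:ℝ)))) from by ring,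
            mul_one_div, div_self hn0, one_mul]
        rw [← hval]
        exact hfin
    -- pointwise convergence on a neighbourhood of x
    have hr : (0:ℝ) < -x/2 := by linarith
    have hptx : ∀ z : ℝ, |z - x| ≤ -x/2 →
        Tendsto (fun n : ℕ => (n:ℝ) * (Real.exp (f^[n] (z/(n:ℝ))) - 1)) atTop
          (nhds (z/(1 - μ*z/2))) := by
      intro z hz
      have hz0 : z < 0 := by
        have := abs_sub_le_iff.mp hz
        linarith [this.1]
      exact hpt z hz0
    -- derivative of the limit
    have hd0 : (1 - μ*x/2) ≠ 0 := by nlinarith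
    have hG : HasDerivAt (fun z : ℝ => z/(1 - μ*z/2)) (1/(1 - μ*x/2)^2) x := by
      have hden : HasDerivAt (fun z : ℝ => 1 - μ*z/2) (-(μ/2)) x := by
        have h1 : HasDerivAt (fun z : ℝ => μ*z/2) (μ/2) x := by
          simpa using ((hasDerivAt_id x).const_mul μ).div_const 2
        have h3 := (hasDerivAt_const x (1:ℝ)).sub h1
        rw [zero_sub] at h3
        exact h3
      have h2 := (hasDerivAt_id x).fun_div hden hd0
      simp only [id_eq] at h2
      have hnum : 1*(1 - μ*x/2) - x*(-(μ/2)) = 1 := by ring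
      rw [hnum] at h2
      exact h2
    have hsq := aux_squeeze hr hconv hder hptx hG
    apply hsq.congr'
    filter_upwards [eventually_ge_atTop 1] with n hn
    rw [hdndef]
    simp only [if_neg (by omega : n ≠ 0)]
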